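/- Let P : C^op → InfSl be a lex primary doctrine and let I : C → G_P be the functor A ↦ (A, ⊤_A). Then the full existential completion P^∃ is naturally isomorphic to the composite Ψ_{G_P} ∘ I^op: for each object A of C, the poset P^∃(A) is isomorphic to the poset reflection of the slice category G_P/(A,⊤), naturally in A. -/

import Mathlib

open CategoryTheory CategoryTheory.Limits

universe w v u

structure Doctrine (C : Type u) [Category.{v} C] where
  P : C → Type w
  [instOrd : ∀ A, SemilatticeInf (P A)]
  [instTop : ∀ A, OrderTop (P A)]
  map : ∀ {A B : C}, (A ⟶ B) → P B → P A
  map_id : ∀ (A : C) (x : P A), map (𝟙 A) x = x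
  map_comp : ∀ {A B D : C} (f : A ⟶ B) (g : B ⟶ D) (x : P D),
      map (f ≫ g) x = map f (map g x)
  map_mono : ∀ {A B : C} (f : A ⟶ B), Monotone (map f)
  map_top : ∀ {A B : C} (f : A ⟶ B), map f (⊤ : P B) = ⊤
  map_inf : ∀ {A B : C} (f : A ⟶ B) (x y : P B), map f (x ⊓ y) = map f x ⊓ map f y

attribute [instance] Doctrine.instOrd Doctrine.instTop

variable {C : Type u} [Category.{v} C]

structure Pt (P : Doctrine.{w} C) where
  base : C
  pred : P.P base

structure PtHom (P : Doctrine.{w} C) (X Y : Pt P) where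
  hom : X.base ⟶ Y.base
  cond : X.pred ≤ P.map hom Y.pred

theorem PtHom.ext' {P : Doctrine.{w} C} {X Y : Pt P} {f g : PtHom P X Y}
    (h : f.hom = g.hom) : f = g := by
  cases f; cases g; cases h; rfl

instance Pt.categoryStruct (P : Doctrine.{w} C) : CategoryStruct (Pt P) where
  Hom X Y := PtHom P X Y
  id X := ⟨𝟙 X.base, by rw [P.map_id]⟩
  comp f g := ⟨f.hom ≫ g.hom, by
    rw [P.map_comp]; exact le_trans f.cond (P.map_mono f.hom g.cond)⟩

@[simp] theorem Pt.comp_hom {P : Doctrine.{w} C} {X Y Z : Pt P} (f : X ⟶ Y) (g : Y ⟶ Z) :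
    (f ≫ g).hom = f.hom ≫ g.hom := rfl

@[simp] theorem Pt.id_hom {P : Doctrine.{w} C} (X : Pt P) : (𝟙 X : X ⟶ X).hom = 𝟙 X.base := rfl

instance Pt.category (P : Doctrine.{w} C) : Category (Pt P) where
  id_comp f := PtHom.ext' (by simp)
  comp_id f := PtHom.ext' (by simp)
  assoc f g h := PtHom.ext' (by simp)

structure ExEl (P : Doctrine.{w} C) (A : C) where
  dom : C
  arr : dom ⟶ A
  pred : P.P dom

def ExLe (P : Doctrine.{w} C) {A : C} (x y : ExEl P A) : Prop :=
  ∃ h : x.dom ⟶ y.dom, x.arr = h ≫ y.arr ∧ x.pred ≤ P.map h y.pred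

def ExEl.top (P : Doctrine.{w} C) (A : C) : ExEl P A := ⟨A, 𝟙 A, ⊤⟩

def ExEl.push {P : Doctrine.{w} C} {A B : C} (x : ExEl P A) (w : A ⟶ B) : ExEl P B :=
  ⟨x.dom, x.arr ≫ w, x.pred⟩

noncomputable def ExEl.meet [HasPullbacks C] {P : Doctrine.{w} C} {A : C} (x y : ExEl P A) : ExEl P A :=
  ⟨pullback x.arr y.arr, pullback.fst x.arr y.arr ≫ x.arr,
    P.map (pullback.fst x.arr y.arr) x.pred ⊓ P.map (pullback.snd x.arr y.arr) y.pred⟩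

noncomputable def Doctrine.reind [HasPullbacks C] (P : Doctrine.{w} C) {A A' : C} (u : A' ⟶ A)
    (y : ExEl P A) : ExEl P A' :=
  ⟨pullback u y.arr, pullback.fst u y.arr, P.map (pullback.snd u y.arr) y.pred⟩

/-- An object of the slice category `G_P / (A, ⊤)`. -/
def SliceObj (P : Doctrine.{w} C) (A : C) : Type _ :=
  Σ X : Pt P, X ⟶ (⟨A, (⊤ : P.P A)⟩ : Pt P)

/-- The order of the weak subobject doctrine `Ψ_{G_P}` at `(A, ⊤)` (before poset
reflection): factorization in the slice. -/
def SliceLe {P : Doctrine.{w} C} {A : C} (s t : SliceObj P A) : Prop :=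
  ∃ k : s.1 ⟶ t.1, k ≫ t.2 = s.2

/-- Reindexing of `Ψ_{G_P}` along `I(u) : (A', ⊤) ⟶ (A, ⊤)`, computed by pullback in
`G_P` (base pullback with the pulled-back predicate). -/
noncomputable def sliceReind (P : Doctrine.{w} C) [HasPullbacks C] {A' A : C}
    (u : A' ⟶ A) (s : SliceObj P A) : SliceObj P A' :=
  ⟨⟨pullback u s.2.hom, P.map (pullback.snd u s.2.hom) s.1.pred⟩,
    ⟨pullback.fst u s.2.hom, by rw [P.map_top]; exact le_top⟩⟩

/-- for a lex primary doctrine `P` and the functor `I : C → G_P`,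
`A ↦ (A, ⊤)`, the full existential completion `P^∃` is naturally isomorphic to
`Ψ_{G_P} ∘ I^op`: for each `A` there is a bijection between `ExEl P A` (whose poset
reflection is `P^∃(A)`) and the objects of `G_P/(A,⊤)` (whose poset reflection is
`Ψ_{G_P}(I A)`), which is an order isomorphism of the underlying preorders and is
natural in `A` with respect to reindexing. -/
theorem fullExCompletion_iso_weakSubobjects_of_points
    [HasFiniteLimits C] (P : Doctrine.{w} C) :
    ∃ e : ∀ A : C, ExEl P A ≃ SliceObj P A,
      (∀ (A : C) (x y : ExEl P A), ExLe P x y ↔ SliceLe (e A x) (e A y)) ∧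
      (∀ {A' A : C} (u : A' ⟶ A) (x : ExEl P A),
        SliceLe (e A' (P.reind u x)) (sliceReind P u (e A x)) ∧
        SliceLe (sliceReind P u (e A x)) (e A' (P.reind u x))) := by
  refine ⟨fun A => {
    toFun := fun x => ⟨⟨x.dom, x.pred⟩, ⟨x.arr, by rw [P.map_top]; exact le_top⟩⟩
    invFun := fun s => ⟨s.1.base, s.2.hom, s.1.pred⟩
    left_inv := fun x => rfl
    right_inv := fun s => rfl }, ?_, ?_⟩
  · intro A x y
    constructor
    · rintro ⟨h, h1, h2⟩
      exact ⟨⟨h, h2⟩, PtHom.ext' h1.symm⟩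
    · rintro ⟨k, hk⟩
      exact ⟨k.hom, congrArg PtHom.hom hk.symm, k.cond⟩
  · intro A' A u x
    constructor
    · exact ⟨𝟙 _, PtHom.ext' (by simp [sliceReind, Doctrine.reind]; rfl)⟩
    · exact ⟨𝟙 _, PtHom.ext' (by simp [sliceReind, Doctrine.reind]; rfl)⟩
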